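/- Let E be a real inner product space, let λ be a real number with 0 < λ < 1, let t ≥ 1 be a natural number, let x : ℕ → E and y : ℕ → ℝ with y(s) = 1 or y(s) = −1 for all s, and let X ≥ 0 be a real number with ‖x(s)‖² ≤ X for all 1 ≤ s ≤ t. Let w : ℕ → E satisfy w(1) = 0 and, for all 1 ≤ s ≤ t, w(s+1) = (1 − 1/s)·w(s) + (1/(λs))·(y(s)·x(s)), and assume every sample is badly classified: y(s)·⟪w(s), x(s)⟫ < 1 for all 1 ≤ s ≤ t. Then ‖w(t+1)‖² ≤ (2·(logb 2 t + 1) + 2·X)/λ², where logb 2 denotes the base-2 logarithm. -/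

import Mathlib

set_option maxHeartbeats 1000000


open RealInnerProductSpace

theorem p2pegasos_upper_bound {E : Type*} [NormedAddCommGroup E] [InnerProductSpace ℝ E]
    (lam : ℝ) (hlam0 : 0 < lam) (hlam1 : lam < 1)
    (t : ℕ) (ht : 1 ≤ t)
    (x : ℕ → E) (y : ℕ → ℝ) (hy : ∀ s, y s = 1 ∨ y s = -1)
    (X : ℝ) (hX : 0 ≤ X) (hxbound : ∀ s, 1 ≤ s → s ≤ t → ‖x s‖^2 ≤ X)
    (w : ℕ → E) (hw1 : w 1 = 0)
    (hupdate : ∀ s : ℕ, 1 ≤ s → s ≤ t →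
      w (s + 1) = (1 - 1/(s : ℝ)) • w s + (1/(lam * s)) • (y s • x s))
    (hbad : ∀ s : ℕ, 1 ≤ s → s ≤ t → y s * ⟪w s, x s⟫ < 1) :
    ‖w (t + 1)‖^2 ≤ (2 * (Real.logb 2 t + 1) + 2 * X)/lam^2 := by
  have key : ∀ s : ℕ, 1 ≤ s → s ≤ t + 1 → ‖w s‖^2 ≤ (2 + X)/lam^2 := by
    intro s hs1 hst
    induction s with
    | zero => omega
    | succ n ih =>
      rcases Nat.lt_or_ge 1 (n+1) with h | h
      · -- inductive step, 1 ≤ n ≤ t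
        have hn1 : 1 ≤ n := by omega
        have hnt : n ≤ t := by omega
        have ihn := ih hn1 (by omega)
        have hup := hupdate n hn1 hnt
        have hb := hbad n hn1 hnt
        have hx := hxbound n hn1 hnt
        have hnpos : (0:ℝ) < n := by exact_mod_cast hn1
        have hnn1 : (1:ℝ) ≤ n := by exact_mod_cast hn1
        obtain ⟨A, hAdef⟩ : ∃ A : ℝ, A = 1 - 1/(n:ℝ) := ⟨_, rfl⟩
        obtain ⟨B, hBdef⟩ : ∃ B : ℝ, B = 1/(lam * n) := ⟨_, rfl⟩
        obtain ⟨C, hCdef⟩ : ∃ C : ℝ, C = (2 + X)/lam^2 := ⟨_, rfl⟩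
        rw [← hCdef] at ihn ⊢
        rw [← hAdef, ← hBdef] at hup
        have hA0 : 0 ≤ A := by
          have : 1/(n:ℝ) ≤ 1 := by rw [div_le_one hnpos]; exact hnn1
          rw [hAdef]; linarith
        have hA1 : A ≤ 1 := by
          have : 0 < 1/(n:ℝ) := by positivity
          rw [hAdef]; linarith
        have hB0 : 0 < B := by rw [hBdef]; positivity
        have hC0 : 0 ≤ C := by rw [hCdef]; positivity
        have hyabs : |y n| = 1 := by rcases hy n with h' | h' <;> simp [h']
        have expand : ‖w (n+1)‖^2
            = A^2 * ‖w n‖^2 + 2*A*B*(y n * ⟪w n, x n⟫) + B^2 * ‖x n‖^2 := by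
          rw [hup, norm_add_sq_real]
          simp only [norm_smul, Real.norm_eq_abs, real_inner_smul_left,
            real_inner_smul_right, abs_of_nonneg hA0, abs_of_nonneg hB0.le, hyabs]
          ring
        have hw0 : 0 ≤ ‖w n‖^2 := by positivity
        have h1 : A^2 * ‖w n‖^2 ≤ A * C := by
          have e1 : A^2 * ‖w n‖^2 ≤ A^2 * C := mul_le_mul_of_nonneg_left ihn (sq_nonneg A)
          have e2 : A^2 ≤ A := by nlinarith
          have e3 : A^2 * C ≤ A * C := mul_le_mul_of_nonneg_right e2 hC0
          linarith
        have h2 : 2*A*B*(y n * ⟪w n, x n⟫) ≤ 2*B := by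
          have hAB : 0 ≤ A * B := mul_nonneg hA0 hB0.le
          nlinarith
        have h3 : B^2 * ‖x n‖^2 ≤ B^2 * X := by nlinarith [sq_nonneg B]
        have h4 : A * C + 2*B + B^2 * X ≤ C := by
          rw [hAdef, hBdef, hCdef]
          have hl : (lam:ℝ) ≠ 0 := ne_of_gt hlam0
          have hn : (n:ℝ) ≠ 0 := ne_of_gt hnpos
          rw [← sub_nonneg]
          have hexp : (2+X)/lam^2 - ((1 - 1/(n:ℝ))*((2+X)/lam^2) + 2*(1/(lam*(n:ℝ))) + (1/(lam*(n:ℝ)))^2*X)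
              = ((2+X)*(n:ℝ) - 2*lam*(n:ℝ) - X)/(lam^2*(n:ℝ)^2) := by
            field_simp
            ring
          rw [hexp]
          apply div_nonneg _ (by positivity)
          have e1 : X*1 ≤ X*(n:ℝ) := mul_le_mul_of_nonneg_left hnn1 hX
          have e2 : lam*(n:ℝ) ≤ 1*(n:ℝ) := mul_le_mul_of_nonneg_right hlam1.le (by positivity)
          linarith
        linarith [expand, h1, h2, h3, h4]
      · -- base case: n + 1 = 1
        have hn0 : n = 0 := by omega
        subst hn0
        rw [hw1]
        norm_num
        positivity
  have hlog : 0 ≤ Real.logb 2 t := by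
    apply Real.logb_nonneg (by norm_num)
    exact_mod_cast ht
  have hfin : (2 + X)/lam^2 ≤ (2 * (Real.logb 2 t + 1) + 2 * X)/lam^2 := by
    rw [div_le_div_iff₀ (by positivity) (by positivity)]
    nlinarith [sq_nonneg lam]
  linarith [key (t+1) (by omega) (le_refl (t+1))]
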